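/- Let H be a unit-cancellative monoid satisfying the ACCP. Then H is atomic, i.e., every non-unit of H can be written as a finite product of atoms of H. -/
import Mathlib


/-- `a` is an atom of a monoid: it is not a unit and cannot be written as a product
of two non-units. -/
def IsAtomIn {H : Type*} [Monoid H] (a : H) : Prop :=
  ¬ IsUnit a ∧ ∀ x y : H, a = x * y → IsUnit x ∨ IsUnit y

section Aux

variable {H : Type*} [Monoid H]

/-- In a unit-cancellative monoid, if a product is a unit then both factors are units. -/
lemma aux_units_of_mul (huc : ∀ x y : H, (x * y = x ∨ y * x = x) → IsUnit y)
    {x y : H} (h : IsUnit (x * y)) : IsUnit x ∧ IsUnit y := by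
  obtain ⟨u, hu⟩ := h
  set l : H := ↑u⁻¹ * x with hl_def
  have hl : l * y = 1 := by rw [hl_def, mul_assoc, ← hu]; exact u.inv_mul
  have hz : (y * l) * y = y := by rw [mul_assoc, hl, mul_one]
  obtain ⟨v, hv⟩ := huc y (y * l) (Or.inr hz)
  have hyr : y * (l * ↑v⁻¹) = 1 := by rw [← mul_assoc, ← hv]; exact v.mul_inv
  have hrl : l * ↑v⁻¹ = l := by
    conv_rhs => rw [← mul_one l, ← hyr, ← mul_assoc, hl, one_mul]
  rw [hrl] at hyr
  have hy : IsUnit y := ⟨⟨y, l, hyr, hl⟩, rfl⟩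
  have hx : x = ↑u * l := by
    conv_lhs => rw [← mul_one x, ← hyr, ← mul_assoc, ← hu]
  exact ⟨hx ▸ (u * ⟨l, y, hl, hyr⟩ : Hˣ).isUnit, hy⟩

omit [Monoid H] in
/-- From ACC on a family of "ideals" `I` one gets maximal elements in nonempty sets. -/
lemma aux_max (I : H → Set H)
    (hacc : ∀ a : ℕ → H, (∀ n, I (a n) ⊆ I (a (n + 1))) →
      ∃ N, ∀ n, N ≤ n → I (a n) = I (a N))
    (S : Set H) (hS : S.Nonempty) : ∃ a ∈ S, ∀ b ∈ S, I a ⊆ I b → I a = I b := by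
  by_contra hcon
  push_neg at hcon
  choose g hgS hgsub hgne using hcon
  obtain ⟨a0, ha0⟩ := hS
  let f : ℕ → {x : H // x ∈ S} :=
    fun n => Nat.rec ⟨a0, ha0⟩ (fun _ p => ⟨g p.1 p.2, hgS p.1 p.2⟩) n
  have hchain : ∀ n, I ((f n).1) ⊆ I ((f (n + 1)).1) := fun n => hgsub (f n).1 (f n).2
  obtain ⟨N, hN⟩ := hacc (fun n => (f n).1) hchain
  exact hgne (f N).1 (f N).2 (hN (N + 1) (Nat.le_succ N)).symm

end Aux

/-- A unit-cancellative monoid satisfying the ACCP (on principal right ideals and on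
principal left ideals) is atomic: every non-unit is a finite product of atoms. -/
theorem stmt_1 {H : Type*} [Monoid H]
    (huc : ∀ x y : H, (x * y = x ∨ y * x = x) → IsUnit y)
    (haccR : ∀ a : ℕ → H,
      (∀ n, {z : H | ∃ r, z = a n * r} ⊆ {z : H | ∃ r, z = a (n + 1) * r}) →
      ∃ N, ∀ n, N ≤ n → {z : H | ∃ r, z = a n * r} = {z : H | ∃ r, z = a N * r})
    (haccL : ∀ a : ℕ → H,
      (∀ n, {z : H | ∃ r, z = r * a n} ⊆ {z : H | ∃ r, z = r * a (n + 1)}) →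
      ∃ N, ∀ n, N ≤ n → {z : H | ∃ r, z = r * a n} = {z : H | ∃ r, z = r * a N}) :
    ∀ x : H, ¬ IsUnit x →
      ∃ l : List H, l ≠ [] ∧ (∀ a ∈ l, IsAtomIn a) ∧ l.prod = x := by
  intro x hx
  by_contra hcon
  set Ω : Set H :=
    {a | ¬ IsUnit a ∧ ¬ ∃ l : List H, l ≠ [] ∧ (∀ b ∈ l, IsAtomIn b) ∧ l.prod = a} with hΩ
  have hΩne : Ω.Nonempty := ⟨x, hx, hcon⟩
  obtain ⟨a, haΩ, hamax⟩ := aux_max (fun t => {z : H | ∃ r, z = t * r}) haccR Ω hΩne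
  have hanotatom : ¬ IsAtomIn a := by
    intro hat
    exact haΩ.2 ⟨[a], by simp, by simpa using hat, by simp⟩
  have hdecomp : ∃ p q : H, a = p * q ∧ ¬ IsUnit p ∧ ¬ IsUnit q := by
    rw [IsAtomIn] at hanotatom
    push_neg at hanotatom
    obtain ⟨p, q, h1, h2, h3⟩ := hanotatom haΩ.1
    exact ⟨p, q, h1, h2, h3⟩
  set T : Set H := {c | ¬ IsUnit c ∧ ∃ b : H, ¬ IsUnit b ∧ a = b * c} with hT
  have hTne : T.Nonempty := by
    obtain ⟨p, q, h1, h2, h3⟩ := hdecomp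
    exact ⟨q, h3, p, h2, h1⟩
  obtain ⟨c, hcT, hcmax⟩ := aux_max (fun t => {z : H | ∃ r, z = r * t}) haccL T hTne
  have hcatom : IsAtomIn c := by
    refine ⟨hcT.1, ?_⟩
    intro u v huv
    by_contra hno
    push_neg at hno
    obtain ⟨b, hb, hab⟩ := hcT.2
    have hbu : ¬ IsUnit (b * u) := fun h => hno.1 (aux_units_of_mul huc h).2
    have hvT : v ∈ T := ⟨hno.2, b * u, hbu, by rw [hab, huv, mul_assoc]⟩
    have hsub : {z : H | ∃ r, z = r * c} ⊆ {z : H | ∃ r, z = r * v} := by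
      rintro z ⟨r, rfl⟩
      exact ⟨r * u, by rw [huv, mul_assoc]⟩
    have heq := hcmax v hvT hsub
    have hv' : v ∈ {z : H | ∃ r, z = r * c} := by
      rw [heq]; exact ⟨1, (one_mul v).symm⟩
    obtain ⟨w, hw⟩ := hv'
    have h1 : (w * u) * v = v := by rw [mul_assoc, ← huv, ← hw]
    have h2 := huc v (w * u) (Or.inr h1)
    exact hno.1 (aux_units_of_mul huc h2).2
  obtain ⟨b, hb, hab⟩ := hcT.2
  have hbΩ : b ∈ Ω := by
    refine ⟨hb, ?_⟩
    rintro ⟨l, hl1, hl2, hl3⟩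
    refine haΩ.2 ⟨l ++ [c], by simp, ?_, ?_⟩
    · intro t ht
      rcases List.mem_append.mp ht with h | h
      · exact hl2 t h
      · simp at h; subst h; exact hcatom
    · rw [List.prod_append, hl3]
      simp [hab.symm]
  have hsub : {z : H | ∃ r, z = a * r} ⊆ {z : H | ∃ r, z = b * r} := by
    rintro z ⟨r, rfl⟩
    exact ⟨c * r, by rw [hab, mul_assoc]⟩
  have heq := hamax b hbΩ hsub
  have hb' : b ∈ {z : H | ∃ r, z = a * r} := by
    rw [heq]; exact ⟨1, (mul_one b).symm⟩
  obtain ⟨r, hr⟩ := hb'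
  have hbr : b * (c * r) = b := by rw [← mul_assoc, ← hab, ← hr]
  exact hcatom.1 (aux_units_of_mul huc (huc b (c * r) (Or.inl hbr))).1
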